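/- arXiv:2511.02158 — 6 statements merged into one kernel-verified Lean document; each statement's English description precedes it below -/
import Mathlib

section
/- Let a, b, c be real numbers with a < 0 and c > 0, set D := sqrt(b^2/4 - a*c) and k0 := (1 + b/(2D))/(1 - b/(2D)), and let v(t) = (-(1/a)*D) * (1 - k0*exp(-2*D*t))/(1 + k0*exp(-2*D*t)) - b/(2a). Then: (i) v is monotone on [0,∞) with 0 ≤ v(t) < -(2D + b)/(2a) for all t ≥ 0; and (ii) if in addition b ≤ 0, then v(t) ≤ -(1/a)*D for all t ≥ 0. -/
open Real Set

/-- Lemma B.1 (bounds part): the explicit solution of the conditional-variance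
Riccati equation is monotone and satisfies `0 ≤ v t < -(2D + b)/(2a)`, and if
`b ≤ 0` then also `v t ≤ -(1/a) D`. -/
theorem stmt1 (a b c : ℝ) (ha : a < 0) (hc : 0 < c)
    (D : ℝ) (hD : D = Real.sqrt (b ^ 2 / 4 - a * c))
    (k0 : ℝ) (hk0 : k0 = (1 + b / (2 * D)) / (1 - b / (2 * D)))
    (v : ℝ → ℝ)
    (hv : ∀ t : ℝ, v t =
      (-(1 / a) * D) * (1 - k0 * Real.exp (-2 * D * t)) / (1 + k0 * Real.exp (-2 * D * t))
        - b / (2 * a)) :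
    (MonotoneOn v (Ici (0 : ℝ)) ∨ AntitoneOn v (Ici (0 : ℝ))) ∧
    (∀ t : ℝ, 0 ≤ t → 0 ≤ v t ∧ v t < -(2 * D + b) / (2 * a)) ∧
    (b ≤ 0 → ∀ t : ℝ, 0 ≤ t → v t ≤ -(1 / a) * D) := by
  have hpos : (0:ℝ) < b ^ 2 / 4 - a * c := by nlinarith [sq_nonneg b, mul_pos_of_neg_of_neg ha (neg_neg_of_pos hc)]
  have hD2 : D ^ 2 = b ^ 2 / 4 - a * c := by rw [hD, sq_sqrt hpos.le]
  have hDpos : 0 < D := by rw [hD]; exact Real.sqrt_pos.mpr hpos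
  have hblt : b < 2 * D := by nlinarith
  have hbgt : -(2 * D) < b := by nlinarith
  have hx1 : 0 < 1 - b / (2 * D) := by
    rw [sub_pos, div_lt_one (by linarith)]; exact hblt
  have hx2 : 0 < 1 + b / (2 * D) := by
    have : -1 < b / (2 * D) := by
      rw [neg_lt, ← neg_div, div_lt_one (by linarith)]; linarith
    linarith
  have hk0pos : 0 < k0 := by rw [hk0]; exact div_pos hx2 hx1
  have hane : a ≠ 0 := ne_of_lt ha
  -- monotone
  have hmono : Monotone v := by
    intro s t hst
    have hes : 0 < k0 * Real.exp (-2 * D * s) := mul_pos hk0pos (Real.exp_pos _)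
    have het : 0 < k0 * Real.exp (-2 * D * t) := mul_pos hk0pos (Real.exp_pos _)
    have hele : k0 * Real.exp (-2 * D * t) ≤ k0 * Real.exp (-2 * D * s) := by
      apply mul_le_mul_of_nonneg_left _ hk0pos.le
      exact Real.exp_le_exp.mpr (by nlinarith)
    rw [hv s, hv t]
    have hcoef : 0 < -(1 / a) * D := by
      apply mul_pos _ hDpos
      simpa using div_pos (by norm_num : (0:ℝ) < 1) (neg_pos.mpr ha)
    set es := k0 * Real.exp (-2 * D * s)
    set et := k0 * Real.exp (-2 * D * t)
    have key : (-(1 / a) * D) * (1 - es) / (1 + es) ≤ (-(1 / a) * D) * (1 - et) / (1 + et) := by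
      rw [div_le_div_iff₀ (by linarith) (by linarith)]
      nlinarith
    linarith
  have hdb : (2 * D - b) ≠ 0 := by intro h; nlinarith
  have h1k : 1 + k0 = (4 * D) / (2 * D - b) := by
    rw [hk0]; field_simp; ring
  have h2k : 1 - k0 = (-2 * b) / (2 * D - b) := by
    rw [hk0]; field_simp; ring
  have hv0 : v 0 = 0 := by
    rw [hv 0]
    have h0 : (-2 : ℝ) * D * 0 = 0 := by ring
    rw [h0, Real.exp_zero, mul_one, h1k, h2k]
    rw [mul_div_assoc, div_div_div_cancel_right₀ hdb]
    field_simp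
    ring
  refine ⟨Or.inl (hmono.monotoneOn _), ?_, ?_⟩
  · intro t ht
    have hlow : 0 ≤ v t := hv0 ▸ hmono ht
    have het : 0 < k0 * Real.exp (-2 * D * t) := mul_pos hk0pos (Real.exp_pos _)
    have hcoef : 0 < -(1 / a) * D := by
      apply mul_pos _ hDpos
      simpa using div_pos (by norm_num : (0:ℝ) < 1) (neg_pos.mpr ha)
    refine ⟨hlow, ?_⟩
    rw [hv t]
    set e := k0 * Real.exp (-2 * D * t)
    have h1 : (-(1 / a) * D) * (1 - e) / (1 + e) < -(1 / a) * D := by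
      rw [div_lt_iff₀ (by linarith)]
      nlinarith
    have h2 : -(2 * D + b) / (2 * a) = -(1 / a) * D - b / (2 * a) := by
      field_simp; ring
    linarith
  · intro hb t ht
    have het : 0 < k0 * Real.exp (-2 * D * t) := mul_pos hk0pos (Real.exp_pos _)
    have hcoef : 0 < -(1 / a) * D := by
      apply mul_pos _ hDpos
      simpa using div_pos (by norm_num : (0:ℝ) < 1) (neg_pos.mpr ha)
    rw [hv t]
    set e := k0 * Real.exp (-2 * D * t)
    have h1 : (-(1 / a) * D) * (1 - e) / (1 + e) < -(1 / a) * D := by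
      rw [div_lt_iff₀ (by linarith)]
      nlinarith
    have h3 : 0 ≤ b / (2 * a) := by
      have := div_nonneg (neg_nonneg.mpr hb) (by linarith : (0:ℝ) ≤ -(2 * a))
      rwa [neg_div_neg_eq] at this
    linarith
end

section
/- Let T > 0, κ and ζ be real numbers, let σ : [0,T] → ℝ be continuous with 0 ≤ σ(t) ≤ b^2 for all t ∈ [0,T], where b^2 ≥ 0 is a constant. Suppose g1, g2, g3 : [0,T] → ℝ are differentiable and satisfy g1'(t) = -2σ(t)g1(t)^2 + 2κ g1(t) - ζ, g2'(t) = -2 b^2 g2(t)^2 + 2κ g2(t) - ζ, g3'(t) = 2κ g3(t) - ζ on [0,T], with common terminal value g1(T) = g2(T) = g3(T). Then g3(t) ≤ g1(t) ≤ g2(t) for all t ∈ [0,T]. -/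
open Real Set

lemma aux_comp (T : ℝ) (hT : 0 < T) (c u d : ℝ → ℝ)
    (hc : ContinuousOn c (Icc (0 : ℝ) T))
    (hu : ∀ t ∈ Icc (0 : ℝ) T, HasDerivAt u (d t) t)
    (hd : ∀ t ∈ Icc (0 : ℝ) T, d t ≤ c t * u t)
    (huT : u T = 0) : ∀ t ∈ Icc (0 : ℝ) T, 0 ≤ u t := by
  set c' : ℝ → ℝ := fun t => c (max 0 (min t T)) with hc'def
  have hmem : ∀ x : ℝ, max 0 (min x T) ∈ Icc (0 : ℝ) T := fun x =>
    ⟨le_max_left _ _, max_le hT.le (min_le_right _ _)⟩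
  have hc' : Continuous c' :=
    hc.comp_continuous (continuous_const.max (continuous_id.min continuous_const)) hmem
  have heq : ∀ t ∈ Icc (0 : ℝ) T, c' t = c t := by
    intro t ht
    simp [hc'def, min_eq_left ht.2, max_eq_right ht.1]
  set A : ℝ → ℝ := fun t => ∫ x in (0 : ℝ)..t, c' x with hAdef
  have hA : ∀ t : ℝ, HasDerivAt A (c' t) t := by
    intro t
    exact intervalIntegral.integral_hasDerivAt_right
      (hc'.intervalIntegrable 0 t)
      hc'.stronglyMeasurable.stronglyMeasurableAtFilter
      hc'.continuousAt
  set f : ℝ → ℝ := fun t => u t * Real.exp (-A t) with hfdef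
  have hf : ∀ t ∈ Icc (0 : ℝ) T,
      HasDerivAt f ((d t - c t * u t) * Real.exp (-A t)) t := by
    intro t ht
    have h1 := (hu t ht).mul (((hA t).neg).exp)
    have : d t * Real.exp (-A t) + u t * (Real.exp (-A t) * -c' t)
        = (d t - c t * u t) * Real.exp (-A t) := by
      rw [heq t ht]; ring
    simp only [Pi.neg_apply] at h1
    rwa [this] at h1
  have hanti : AntitoneOn f (Icc 0 T) := by
    apply antitoneOn_of_deriv_nonpos (convex_Icc 0 T)
    · exact fun t ht => (hf t ht).continuousAt.continuousWithinAt
    · intro t ht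
      rw [interior_Icc] at ht
      exact (hf t (Ioo_subset_Icc_self ht)).differentiableAt.differentiableWithinAt
    · intro t ht
      rw [interior_Icc] at ht
      have ht' := Ioo_subset_Icc_self ht
      rw [(hf t ht').deriv]
      exact mul_nonpos_of_nonpos_of_nonneg (sub_nonpos.mpr (hd t ht')) (exp_pos _).le
  intro t ht
  have : f T ≤ f t := hanti ht (right_mem_Icc.mpr hT.le) ht.2
  rw [hfdef] at this
  simp only [huT, zero_mul] at this
  nlinarith [exp_pos (-A t), this]

/-- Lemma B.2: comparison theorem for scalar Riccati equations integrated
backward from a common terminal value. -/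
theorem stmt2 (T κ ζ b : ℝ) (hT : 0 < T) (hb : 0 ≤ b ^ 2)
    (σ : ℝ → ℝ) (hσc : ContinuousOn σ (Icc (0 : ℝ) T))
    (hσ : ∀ t ∈ Icc (0 : ℝ) T, 0 ≤ σ t ∧ σ t ≤ b ^ 2)
    (g1 g2 g3 : ℝ → ℝ)
    (hg1 : ∀ t ∈ Icc (0 : ℝ) T,
      HasDerivAt g1 (-2 * σ t * g1 t ^ 2 + 2 * κ * g1 t - ζ) t)
    (hg2 : ∀ t ∈ Icc (0 : ℝ) T,
      HasDerivAt g2 (-2 * b ^ 2 * g2 t ^ 2 + 2 * κ * g2 t - ζ) t)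
    (hg3 : ∀ t ∈ Icc (0 : ℝ) T,
      HasDerivAt g3 (2 * κ * g3 t - ζ) t)
    (h12 : g1 T = g2 T) (h13 : g1 T = g3 T) :
    ∀ t ∈ Icc (0 : ℝ) T, g3 t ≤ g1 t ∧ g1 t ≤ g2 t := by
  have hc1 : ∀ t ∈ Icc (0 : ℝ) T, 0 ≤ g1 t - g3 t := by
    apply aux_comp T hT (fun _ => 2 * κ) _
      (fun t => (-2 * σ t * g1 t ^ 2 + 2 * κ * g1 t - ζ) - (2 * κ * g3 t - ζ))
      continuousOn_const
      (fun t ht => (hg1 t ht).sub (hg3 t ht))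
    · intro t ht
      have := (hσ t ht).1
      simp only [Pi.sub_apply]
      nlinarith [sq_nonneg (g1 t)]
    · simp [h13]
  have hc2 : ∀ t ∈ Icc (0 : ℝ) T, 0 ≤ g2 t - g1 t := by
    apply aux_comp T hT (fun t => 2 * κ - 2 * b ^ 2 * (g1 t + g2 t)) _
      (fun t => (-2 * b ^ 2 * g2 t ^ 2 + 2 * κ * g2 t - ζ)
        - (-2 * σ t * g1 t ^ 2 + 2 * κ * g1 t - ζ))
      (by
        apply ContinuousOn.sub continuousOn_const
        apply ContinuousOn.mul continuousOn_const
        exact ContinuousOn.add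
          (fun t ht => (hg1 t ht).continuousAt.continuousWithinAt)
          (fun t ht => (hg2 t ht).continuousAt.continuousWithinAt))
      (fun t ht => (hg2 t ht).sub (hg1 t ht))
    · intro t ht
      have h1 := (hσ t ht).2
      simp only [Pi.sub_apply]
      nlinarith [sq_nonneg (g1 t)]
    · simp [h12]
  exact fun t ht => ⟨by linarith [hc1 t ht], by linarith [hc2 t ht]⟩
end

section
/- Let κ > 0, b ≠ 0, ζ > 0 with Δ := 2 b^2 ζ - κ^2 < 0, and set ω := sqrt(-Δ) and let T > 0. Then ω*cosh(ω s) + κ*sinh(ω s) > 0 for every s ≥ 0, and the function f(t) := ζ * sinh(ω (T - t)) / (ω*cosh(ω (T - t)) + κ*sinh(ω (T - t))) is well defined on [0,T], satisfies f(T) = 0, f(t) ≥ 0 on [0,T], and solves f'(t) = -2 b^2 f(t)^2 + 2κ f(t) - ζ on [0,T]. -/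
open Real Set

/-- Case `Δ < 0` of Lemma B.3: the hyperbolic explicit solution of the terminal
value Riccati problem `f' = -2 b² f² + 2κ f - ζ`, `f T = 0`. -/
theorem stmt5 (κ b ζ T : ℝ) (hκ : 0 < κ) (hb : b ≠ 0) (hζ : 0 < ζ) (hT : 0 < T)
    (hΔ : 2 * b ^ 2 * ζ - κ ^ 2 < 0)
    (ω : ℝ) (hω : ω = Real.sqrt (-(2 * b ^ 2 * ζ - κ ^ 2)))
    (f : ℝ → ℝ)
    (hf : ∀ t : ℝ, f t = ζ * Real.sinh (ω * (T - t)) /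
      (ω * Real.cosh (ω * (T - t)) + κ * Real.sinh (ω * (T - t)))) :
    (∀ s : ℝ, 0 ≤ s → 0 < ω * Real.cosh (ω * s) + κ * Real.sinh (ω * s)) ∧
    f T = 0 ∧
    (∀ t ∈ Icc (0 : ℝ) T, 0 ≤ f t) ∧
    (∀ t ∈ Icc (0 : ℝ) T,
      HasDerivAt f (-2 * b ^ 2 * f t ^ 2 + 2 * κ * f t - ζ) t) := by
  have hω2 : ω ^ 2 = κ ^ 2 - 2 * b ^ 2 * ζ := by
    rw [hω, Real.sq_sqrt (by linarith)]; ring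
  have hωpos : 0 < ω := by
    rw [hω]; exact Real.sqrt_pos.mpr (by linarith)
  have hden : ∀ s : ℝ, 0 ≤ s → 0 < ω * Real.cosh (ω * s) + κ * Real.sinh (ω * s) := by
    intro s hs
    exact add_pos_of_pos_of_nonneg (mul_pos hωpos (Real.cosh_pos _))
      (mul_nonneg hκ.le (Real.sinh_nonneg_iff.mpr (mul_nonneg hωpos.le hs)))
  refine ⟨hden, ?_, ?_, ?_⟩
  · rw [hf]; simp
  · intro t ht
    rw [hf]
    apply div_nonneg
    · exact mul_nonneg hζ.le (Real.sinh_nonneg_iff.mpr (mul_nonneg hωpos.le (by linarith [ht.2])))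
    · exact (hden (T - t) (by linarith [ht.2])).le
  · intro t ht
    have hfe : f = fun t => ζ * Real.sinh (ω * (T - t)) /
        (ω * Real.cosh (ω * (T - t)) + κ * Real.sinh (ω * (T - t))) := funext hf
    have hd : 0 < ω * Real.cosh (ω * (T - t)) + κ * Real.sinh (ω * (T - t)) :=
      hden _ (by linarith [ht.2])
    have hu : HasDerivAt (fun t : ℝ => ω * (T - t)) (-ω) t := by
      simpa using ((hasDerivAt_id t).const_sub T).const_mul ω
    have hS : HasDerivAt (fun t : ℝ => Real.sinh (ω * (T - t)))
        (Real.cosh (ω * (T - t)) * (-ω)) t := hu.sinh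
    have hC : HasDerivAt (fun t : ℝ => Real.cosh (ω * (T - t)))
        (Real.sinh (ω * (T - t)) * (-ω)) t := hu.cosh
    have hdiv := (hS.const_mul ζ).div ((hC.const_mul ω).add (hS.const_mul κ)) hd.ne'
    have hfd : HasDerivAt f ((ζ * (Real.cosh (ω * (T - t)) * (-ω)) *
        (ω * Real.cosh (ω * (T - t)) + κ * Real.sinh (ω * (T - t))) -
        ζ * Real.sinh (ω * (T - t)) *
        (ω * (Real.sinh (ω * (T - t)) * (-ω)) + κ * (Real.cosh (ω * (T - t)) * (-ω)))) /
        (ω * Real.cosh (ω * (T - t)) + κ * Real.sinh (ω * (T - t))) ^ 2) t := by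
      rw [hfe]; exact hdiv
    convert hfd using 1
    rw [hf t]
    rw [eq_div_iff (pow_ne_zero 2 hd.ne')]
    have hx : ζ * Real.sinh (ω * (T - t)) /
        (ω * Real.cosh (ω * (T - t)) + κ * Real.sinh (ω * (T - t))) *
        (ω * Real.cosh (ω * (T - t)) + κ * Real.sinh (ω * (T - t))) =
        ζ * Real.sinh (ω * (T - t)) := div_mul_cancel₀ _ hd.ne'
    linear_combination (-2 * b ^ 2 * (ζ * Real.sinh (ω * (T - t)) /
        (ω * Real.cosh (ω * (T - t)) + κ * Real.sinh (ω * (T - t))) *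
        (ω * Real.cosh (ω * (T - t)) + κ * Real.sinh (ω * (T - t))) + ζ * Real.sinh (ω * (T - t)))
      + 2 * κ * (ω * Real.cosh (ω * (T - t)) + κ * Real.sinh (ω * (T - t)))) * hx
      - ζ * Real.sinh (ω * (T - t)) ^ 2 * hω2
end

section
/- Let κ > 0, b ≠ 0, ζ > 0 with 2 b^2 ζ = κ^2, and let T > 0. Then the function f(t) := ζ (T - t) / (1 + κ (T - t)) is well defined on [0,T], satisfies f(T) = 0, f(t) ≥ 0 on [0,T], and solves f'(t) = -2 b^2 f(t)^2 + 2κ f(t) - ζ on [0,T]. -/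
open Real Set

/-- Degenerate case `2 b² ζ = κ²` of Lemma B.3: the rational explicit solution
of the terminal value Riccati problem `f' = -2 b² f² + 2κ f - ζ`, `f T = 0`. -/
theorem stmt6 (κ b ζ T : ℝ) (hκ : 0 < κ) (hb : b ≠ 0) (hζ : 0 < ζ) (hT : 0 < T)
    (hΔ : 2 * b ^ 2 * ζ = κ ^ 2)
    (f : ℝ → ℝ)
    (hf : ∀ t : ℝ, f t = ζ * (T - t) / (1 + κ * (T - t))) :
    f T = 0 ∧
    (∀ t ∈ Icc (0 : ℝ) T, 0 ≤ f t) ∧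
    (∀ t ∈ Icc (0 : ℝ) T,
      HasDerivAt f (-2 * b ^ 2 * f t ^ 2 + 2 * κ * f t - ζ) t) := by
  have hfe : f = fun t => ζ * (T - t) / (1 + κ * (T - t)) := funext hf
  subst hfe
  refine ⟨by simp, ?_, ?_⟩
  · intro t ht
    have hd : 0 < 1 + κ * (T - t) := by nlinarith [ht.1, ht.2]
    have hn : 0 ≤ ζ * (T - t) := by nlinarith [ht.2]
    exact div_nonneg hn hd.le
  · intro t ht
    have hd : 0 < 1 + κ * (T - t) := by nlinarith [ht.1, ht.2]
    have h1 : HasDerivAt (fun t : ℝ => ζ * (T - t)) (-ζ) t := by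
      simpa using ((hasDerivAt_id t).const_sub T).const_mul ζ
    have h2 : HasDerivAt (fun t : ℝ => 1 + κ * (T - t)) (-κ) t := by
      simpa using (((hasDerivAt_id t).const_sub T).const_mul κ).const_add 1
    have := h1.div h2 hd.ne'
    have hb2 : b ^ 2 = κ ^ 2 / (2 * ζ) := by field_simp; linarith [hΔ]
    refine this.congr_deriv ?_
    rw [hb2]
    field_simp
    ring
end

section
/- Let κ > 0, b ≠ 0, ζ > 0 with Δ := 2 b^2 ζ - κ^2 > 0, set ω := sqrt(Δ) and T_c := (π - arctan(ω/κ)) / ω. Then for every T with 0 < T < T_c, the quantity ω*cos(ω (T - t)) + κ*sin(ω (T - t)) is strictly positive for all t ∈ [0,T], and the function f(t) := ζ * sin(ω (T - t)) / (ω*cos(ω (T - t)) + κ*sin(ω (T - t))) is well defined on [0,T], satisfies f(T) = 0, f(t) ≥ 0 on [0,T], and solves f'(t) = -2 b^2 f(t)^2 + 2κ f(t) - ζ on [0,T]. -/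
open Real Set

lemma aux_pos (κ ω : ℝ) (hκ : 0 < κ) (hω : 0 < ω) (s : ℝ) (hs0 : 0 ≤ s)
    (hs : s < Real.pi - Real.arctan (ω / κ)) :
    0 < ω * Real.cos s + κ * Real.sin s := by
  set φ := Real.arctan (ω / κ) with hφ
  have hφpos : 0 < φ := by
    rw [hφ, ← Real.arctan_zero]
    exact Real.arctan_strictMono (div_pos hω hκ)
  have hr : 0 < Real.sqrt (κ ^ 2 + ω ^ 2) := Real.sqrt_pos.2 (by positivity)
  have h1 : Real.sqrt (1 + (ω / κ) ^ 2) = Real.sqrt (κ ^ 2 + ω ^ 2) / κ := by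
    rw [show 1 + (ω / κ) ^ 2 = (κ ^ 2 + ω ^ 2) / κ ^ 2 by field_simp,
      Real.sqrt_div (by positivity), Real.sqrt_sq hκ.le]
  have hkey : ω * Real.cos s + κ * Real.sin s
      = Real.sqrt (κ ^ 2 + ω ^ 2) * Real.sin (s + φ) := by
    rw [Real.sin_add, hφ, Real.sin_arctan, Real.cos_arctan, h1]
    field_simp
    ring
  rw [hkey]
  exact mul_pos hr (Real.sin_pos_of_pos_of_lt_pi (by linarith) (by linarith))

/-- Case `Δ > 0` of Lemma B.3: for horizons `T` below the critical time `T_c`,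
the trigonometric explicit solution of the terminal value Riccati problem
`f' = -2 b² f² + 2κ f - ζ`, `f T = 0`, is well defined and nonnegative. -/
theorem stmt7 (κ b ζ : ℝ) (hκ : 0 < κ) (hb : b ≠ 0) (hζ : 0 < ζ)
    (hΔ : 0 < 2 * b ^ 2 * ζ - κ ^ 2)
    (ω : ℝ) (hω : ω = Real.sqrt (2 * b ^ 2 * ζ - κ ^ 2))
    (Tc : ℝ) (hTc : Tc = (Real.pi - Real.arctan (ω / κ)) / ω)
    (T : ℝ) (hT : 0 < T) (hTTc : T < Tc)
    (f : ℝ → ℝ)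
    (hf : ∀ t : ℝ, f t = ζ * Real.sin (ω * (T - t)) /
      (ω * Real.cos (ω * (T - t)) + κ * Real.sin (ω * (T - t)))) :
    (∀ t ∈ Icc (0 : ℝ) T,
      0 < ω * Real.cos (ω * (T - t)) + κ * Real.sin (ω * (T - t))) ∧
    f T = 0 ∧
    (∀ t ∈ Icc (0 : ℝ) T, 0 ≤ f t) ∧
    (∀ t ∈ Icc (0 : ℝ) T,
      HasDerivAt f (-2 * b ^ 2 * f t ^ 2 + 2 * κ * f t - ζ) t) := by
  have hωpos : 0 < ω := hω ▸ Real.sqrt_pos.2 hΔ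
  have hω2 : ω ^ 2 = 2 * b ^ 2 * ζ - κ ^ 2 := by
    rw [hω]; exact Real.sq_sqrt hΔ.le
  have hφlt : Real.arctan (ω / κ) < Real.pi / 2 := Real.arctan_lt_pi_div_two _
  have hsb : ∀ t ∈ Icc (0 : ℝ) T,
      0 ≤ ω * (T - t) ∧ ω * (T - t) < Real.pi - Real.arctan (ω / κ) := by
    intro t ht
    constructor
    · exact mul_nonneg hωpos.le (by linarith [ht.2])
    · have h1 : ω * (T - t) ≤ ω * T := by nlinarith [ht.1]
      have h2 : ω * T < ω * Tc := by nlinarith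
      have h3 : ω * Tc = Real.pi - Real.arctan (ω / κ) := by
        rw [hTc]; field_simp
      linarith
  have hpos : ∀ t ∈ Icc (0 : ℝ) T,
      0 < ω * Real.cos (ω * (T - t)) + κ * Real.sin (ω * (T - t)) := by
    intro t ht
    obtain ⟨h0, h1⟩ := hsb t ht
    exact aux_pos κ ω hκ hωpos _ h0 h1
  have hφpos : 0 < Real.arctan (ω / κ) := by
    rw [← Real.arctan_zero]
    exact Real.arctan_strictMono (div_pos hωpos hκ)
  refine ⟨hpos, by rw [hf]; simp, ?_, ?_⟩
  · intro t ht
    rw [hf]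
    apply div_nonneg _ (hpos t ht).le
    exact mul_nonneg hζ.le (Real.sin_nonneg_of_nonneg_of_le_pi (hsb t ht).1
      (by linarith [(hsb t ht).2]))
  · intro t ht
    have hlin : HasDerivAt (fun x : ℝ => ω * (T - x)) (ω * -1) t :=
      ((hasDerivAt_id t).const_sub T).const_mul ω
    have hsin : HasDerivAt (fun x : ℝ => Real.sin (ω * (T - x)))
        (Real.cos (ω * (T - t)) * (ω * -1)) t :=
      (Real.hasDerivAt_sin _).comp t hlin
    have hcos : HasDerivAt (fun x : ℝ => Real.cos (ω * (T - x)))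
        (-Real.sin (ω * (T - t)) * (ω * -1)) t :=
      (Real.hasDerivAt_cos _).comp t hlin
    have hD := hpos t ht
    have hdiv := (hsin.const_mul ζ).div ((hcos.const_mul ω).add (hsin.const_mul κ)) hD.ne'
    rw [funext hf]
    convert hdiv using 1
    have pyth := Real.sin_sq_add_cos_sq (ω * (T - t))
    on_goal 1 => rfl
    on_goal 1 => rfl
    on_goal 1 => rfl
    simp only [Pi.add_apply]
    set S := Real.sin (ω * (T - t)) with hS
    set C := Real.cos (ω * (T - t)) with hC
    have hDne : ω * C + κ * S ≠ 0 := hD.ne'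
    field_simp
    rw [div_sub_one (pow_ne_zero 2 (by rwa [mul_comm S κ])), div_left_inj' (pow_ne_zero 2 (by rwa [mul_comm S κ]))]
    linear_combination S ^ 2 * hω2
end

section
/- Let κ > 0, b ≠ 0, ζ > 0, T > 0 and set Δ := 2 b^2 ζ - κ^2. If either Δ ≤ 0, or Δ > 0 and T < (π - arctan(sqrt(Δ)/κ)) / sqrt(Δ), then there exists a differentiable function g : [0,T] → ℝ with g(T) = 0, g(t) ≥ 0 for all t ∈ [0,T], and g'(t) = -2 b^2 g(t)^2 + 2κ g(t) - ζ on [0,T]; moreover this solution is unique among differentiable functions on [0,T] with terminal value 0. -/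
open Real Set

lemma riccati_uniq (κ b ζ T : ℝ) {g w : ℝ → ℝ}
    (hg : ∀ t ∈ Icc (0:ℝ) T, HasDerivAt g (-2*b^2*g t^2 + 2*κ*g t - ζ) t)
    (hw : ∀ t ∈ Icc (0:ℝ) T, HasDerivAt w (-2*b^2*w t^2 + 2*κ*w t - ζ) t)
    (hend : w T = g T) : ∀ t ∈ Icc (0:ℝ) T, w t = g t := by
  have hgc : ContinuousOn g (Icc (0:ℝ) T) := fun t ht => ((hg t ht).continuousAt).continuousWithinAt
  have hwc : ContinuousOn w (Icc (0:ℝ) T) := fun t ht => ((hw t ht).continuousAt).continuousWithinAt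
  obtain ⟨Cg, hCg⟩ := isCompact_Icc.exists_bound_of_continuousOn hgc
  obtain ⟨Cw, hCw⟩ := isCompact_Icc.exists_bound_of_continuousOn hwc
  set M : ℝ := max Cg Cw with hM
  set K : NNReal := Real.toNNReal (4*b^2*M + 2*|κ|) with hK
  have hlip : ∀ t : ℝ, LipschitzOnWith K (fun y : ℝ => -2*b^2*y^2 + 2*κ*y - ζ) (Icc (-M) M) := by
    intro t
    apply LipschitzOnWith.of_dist_le_mul
    intro x hx y hy
    simp only [Real.dist_eq]
    have h1 : (-2*b^2*x^2 + 2*κ*x - ζ) - (-2*b^2*y^2 + 2*κ*y - ζ)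
        = (x - y) * (-2*b^2*(x+y) + 2*κ) := by ring
    rw [h1, abs_mul, mul_comm]
    have hb2 : (0:ℝ) ≤ b^2 := sq_nonneg b
    have hxm := hx.1; have hxM := hx.2; have hym := hy.1; have hyM := hy.2
    have habs : |(-2*b^2*(x+y) + 2*κ)| ≤ 4*b^2*M + 2*|κ| := by
      rw [abs_le]
      constructor <;> nlinarith [le_abs_self κ, neg_abs_le κ]
    calc |(-2*b^2*(x+y) + 2*κ)| * |x - y| ≤ (4*b^2*M + 2*|κ|) * |x - y| := by
          apply mul_le_mul_of_nonneg_right habs (abs_nonneg _)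
      _ ≤ (K : ℝ) * |x - y| := by
          apply mul_le_mul_of_nonneg_right _ (abs_nonneg _)
          exact Real.le_coe_toNNReal _
  have := ODE_solution_unique_of_mem_Icc_left (v := fun _ y => -2*b^2*y^2 + 2*κ*y - ζ)
      (s := fun _ => Icc (-M) M) (fun t _ => hlip t) hwc
      (fun t ht => (hw t (Ioc_subset_Icc_self ht)).hasDerivWithinAt)
      (fun t ht => by
        have := hCw t (Ioc_subset_Icc_self ht)
        rw [Real.norm_eq_abs, abs_le] at this
        exact ⟨by linarith [le_max_right Cg Cw], by linarith [le_max_right Cg Cw]⟩)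
      hgc
      (fun t ht => (hg t (Ioc_subset_Icc_self ht)).hasDerivWithinAt)
      (fun t ht => by
        have := hCg t (Ioc_subset_Icc_self ht)
        rw [Real.norm_eq_abs, abs_le] at this
        exact ⟨by linarith [le_max_left Cg Cw], by linarith [le_max_left Cg Cw]⟩)
      hend
  exact fun t ht => this ht

lemma trig_denom_pos {ω κ : ℝ} (hω : 0 < ω) (hκ : 0 < κ) {θ : ℝ} (h0 : 0 ≤ θ)
    (hθ : θ < π - arctan (ω/κ)) : 0 < ω * Real.cos θ + κ * Real.sin θ := by
  have hat0 : 0 < arctan (ω/κ) := by simpa using Real.arctan_strictMono (div_pos hω hκ)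
  have hatπ : arctan (ω/κ) < π/2 := Real.arctan_lt_pi_div_two _
  have hπ := Real.pi_pos
  have hθπ : θ < π := by linarith
  rcases lt_or_ge θ (π/2) with h | h
  · have hc : 0 < Real.cos θ := Real.cos_pos_of_mem_Ioo ⟨by linarith, h⟩
    have hs : 0 ≤ Real.sin θ := Real.sin_nonneg_of_nonneg_of_le_pi h0 hθπ.le
    nlinarith [mul_pos hω hc, mul_nonneg hκ.le hs]
  · rcases eq_or_lt_of_le h with h | h
    · rw [← h]
      simp [Real.cos_pi_div_two, Real.sin_pi_div_two]
      linarith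
    · have hs : 0 < Real.sin θ := Real.sin_pos_of_pos_of_lt_pi (by linarith) hθπ
      have h1 : arctan (ω/κ) < π - θ := by linarith
      have h2 : Real.tan (arctan (ω/κ)) < Real.tan (π - θ) :=
        Real.tan_lt_tan_of_nonneg_of_lt_pi_div_two hat0.le (by linarith) h1
      rw [Real.tan_arctan, Real.tan_eq_sin_div_cos] at h2
      have hcpos : 0 < Real.cos (π - θ) := Real.cos_pos_of_mem_Ioo ⟨by linarith, by linarith⟩
      have h3 := (div_lt_div_iff₀ hκ hcpos).mp h2
      rw [Real.cos_pi_sub] at hcpos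
      rw [Real.cos_pi_sub, Real.sin_pi_sub] at h3
      linarith

lemma hasDerivAt_inner (a T : ℝ) (t : ℝ) : HasDerivAt (fun t : ℝ => a*(T-t)) (-a) t := by
  simpa using ((hasDerivAt_id t).const_sub T).const_mul a

lemma exists_zero (κ b ζ T : ℝ) (hκ : 0 < κ) (hζ : 0 < ζ) (h : κ^2 = 2*b^2*ζ) :
    ∃ g : ℝ → ℝ, g T = 0 ∧ (∀ t ∈ Icc (0:ℝ) T, 0 ≤ g t) ∧
      (∀ t ∈ Icc (0:ℝ) T, HasDerivAt g (-2 * b ^ 2 * g t ^ 2 + 2 * κ * g t - ζ) t) := by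
  refine ⟨fun t => ζ*(T-t)/(1+κ*(T-t)), by simp, ?_, ?_⟩
  · intro t ht
    have hd : (0:ℝ) < 1+κ*(T-t) := by nlinarith [ht.2]
    exact div_nonneg (by nlinarith [ht.2]) hd.le
  · intro t ht
    have hd : (0:ℝ) < 1+κ*(T-t) := by nlinarith [ht.2]
    have hN : HasDerivAt (fun t : ℝ => ζ*(T-t)) (-ζ) t := by
      simpa using hasDerivAt_inner ζ T t
    have hD : HasDerivAt (fun t : ℝ => 1+κ*(T-t)) (-κ) t := by
      simpa using (hasDerivAt_inner κ T t).const_add 1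
    have hdiv := hN.div hD hd.ne'
    refine hdiv.congr_deriv (Eq.symm ?_)
    have key : (-ζ * (1+κ*(T-t)) - ζ*(T-t) * (-κ))
        = -2*b^2*(ζ*(T-t))^2 + 2*κ*(ζ*(T-t))*(1+κ*(T-t)) - ζ*(1+κ*(T-t))^2 := by
      linear_combination (-ζ*(T-t)^2) * h
    rw [key, eq_div_iff (pow_ne_zero 2 hd.ne')]
    have e : (ζ*(T-t)) / (1+κ*(T-t)) * (1+κ*(T-t)) = ζ*(T-t) := div_mul_cancel₀ _ hd.ne'
    linear_combination (-2*b^2*((ζ*(T-t)) / (1+κ*(T-t)) * (1+κ*(T-t)) + ζ*(T-t)) + 2*κ*(1+κ*(T-t))) * e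

lemma exists_neg (κ b ζ T : ℝ) (hκ : 0 < κ) (hζ : 0 < ζ) (h : 2*b^2*ζ < κ^2) :
    ∃ g : ℝ → ℝ, g T = 0 ∧ (∀ t ∈ Icc (0:ℝ) T, 0 ≤ g t) ∧
      (∀ t ∈ Icc (0:ℝ) T, HasDerivAt g (-2 * b ^ 2 * g t ^ 2 + 2 * κ * g t - ζ) t) := by
  set μ : ℝ := Real.sqrt (κ^2 - 2*b^2*ζ) with hμdef
  have hμ : 0 < μ := Real.sqrt_pos.mpr (by linarith)
  have hμ2 : μ^2 = κ^2 - 2*b^2*ζ := Real.sq_sqrt (by linarith)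
  have hdpos : ∀ t ∈ Icc (0:ℝ) T, 0 < μ * Real.cosh (μ*(T-t)) + κ * Real.sinh (μ*(T-t)) := by
    intro t ht
    have hs : 0 ≤ Real.sinh (μ*(T-t)) := Real.sinh_nonneg_iff.mpr (by nlinarith [ht.2])
    nlinarith [mul_pos hμ (Real.cosh_pos (x := μ*(T-t))), mul_nonneg hκ.le hs]
  refine ⟨fun t => ζ * Real.sinh (μ*(T-t)) / (μ * Real.cosh (μ*(T-t)) + κ * Real.sinh (μ*(T-t))),
    by simp, ?_, ?_⟩
  · intro t ht
    have hs : 0 ≤ Real.sinh (μ*(T-t)) := Real.sinh_nonneg_iff.mpr (by nlinarith [ht.2])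
    exact div_nonneg (mul_nonneg hζ.le hs) (hdpos t ht).le
  · intro t ht
    have hd := hdpos t ht
    have hsinh := (Real.hasDerivAt_sinh (μ*(T-t))).comp t (hasDerivAt_inner μ T t)
    have hcosh := (Real.hasDerivAt_cosh (μ*(T-t))).comp t (hasDerivAt_inner μ T t)
    have hN := hsinh.const_mul ζ
    have hD := (hcosh.const_mul μ).add (hsinh.const_mul κ)
    have hdiv := hN.div hD hd.ne'
    refine hdiv.congr_deriv (Eq.symm ?_)
    simp only [Function.comp, Pi.add_apply]
    have key : ζ * (Real.cosh (μ*(T-t)) * (-μ)) *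
          (μ * Real.cosh (μ*(T-t)) + κ * Real.sinh (μ*(T-t)))
        - ζ * Real.sinh (μ*(T-t)) *
          (μ * (Real.sinh (μ*(T-t)) * (-μ)) + κ * (Real.cosh (μ*(T-t)) * (-μ)))
        = -2*b^2*(ζ * Real.sinh (μ*(T-t)))^2
          + 2*κ*(ζ * Real.sinh (μ*(T-t)))*(μ * Real.cosh (μ*(T-t)) + κ * Real.sinh (μ*(T-t)))
          - ζ*(μ * Real.cosh (μ*(T-t)) + κ * Real.sinh (μ*(T-t)))^2 := by
      linear_combination (ζ * Real.sinh (μ*(T-t))^2) * hμ2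
    rw [key, eq_div_iff (pow_ne_zero 2 hd.ne')]
    have e : (ζ * Real.sinh (μ*(T-t))) / (μ * Real.cosh (μ*(T-t)) + κ * Real.sinh (μ*(T-t))) * (μ * Real.cosh (μ*(T-t)) + κ * Real.sinh (μ*(T-t))) = ζ * Real.sinh (μ*(T-t)) := div_mul_cancel₀ _ hd.ne'
    linear_combination (-2*b^2*((ζ * Real.sinh (μ*(T-t))) / (μ * Real.cosh (μ*(T-t)) + κ * Real.sinh (μ*(T-t))) * (μ * Real.cosh (μ*(T-t)) + κ * Real.sinh (μ*(T-t))) + ζ * Real.sinh (μ*(T-t))) + 2*κ*(μ * Real.cosh (μ*(T-t)) + κ * Real.sinh (μ*(T-t)))) * e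

lemma exists_pos (κ b ζ T : ℝ) (hκ : 0 < κ) (hζ : 0 < ζ) (hT : 0 < T)
    (h : 0 < 2*b^2*ζ - κ^2)
    (hTlt : T < (π - arctan (Real.sqrt (2*b^2*ζ - κ^2) / κ)) / Real.sqrt (2*b^2*ζ - κ^2)) :
    ∃ g : ℝ → ℝ, g T = 0 ∧ (∀ t ∈ Icc (0:ℝ) T, 0 ≤ g t) ∧
      (∀ t ∈ Icc (0:ℝ) T, HasDerivAt g (-2 * b ^ 2 * g t ^ 2 + 2 * κ * g t - ζ) t) := by
  set ω : ℝ := Real.sqrt (2*b^2*ζ - κ^2) with hωdef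
  have hω : 0 < ω := Real.sqrt_pos.mpr h
  have hω2 : ω^2 = 2*b^2*ζ - κ^2 := Real.sq_sqrt h.le
  have hθlt : ∀ t ∈ Icc (0:ℝ) T, ω*(T-t) < π - arctan (ω/κ) := by
    intro t ht
    have h1 : ω * T < π - arctan (ω/κ) := by
      have := (lt_div_iff₀ hω).mp hTlt
      linarith
    nlinarith [ht.1]
  have hθ0 : ∀ t ∈ Icc (0:ℝ) T, 0 ≤ ω*(T-t) := by
    intro t ht
    nlinarith [ht.2]
  have hdpos : ∀ t ∈ Icc (0:ℝ) T, 0 < ω * Real.cos (ω*(T-t)) + κ * Real.sin (ω*(T-t)) :=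
    fun t ht => trig_denom_pos hω hκ (hθ0 t ht) (hθlt t ht)
  refine ⟨fun t => ζ * Real.sin (ω*(T-t)) / (ω * Real.cos (ω*(T-t)) + κ * Real.sin (ω*(T-t))),
    by simp, ?_, ?_⟩
  · intro t ht
    have hat0 : 0 ≤ arctan (ω/κ) := by simpa using Real.arctan_strictMono.monotone (div_nonneg hω.le hκ.le)
    have hs : 0 ≤ Real.sin (ω*(T-t)) :=
      Real.sin_nonneg_of_nonneg_of_le_pi (hθ0 t ht) (by linarith [hθlt t ht])
    exact div_nonneg (mul_nonneg hζ.le hs) (hdpos t ht).le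
  · intro t ht
    have hd := hdpos t ht
    have hsin := (Real.hasDerivAt_sin (ω*(T-t))).comp t (hasDerivAt_inner ω T t)
    have hcos := (Real.hasDerivAt_cos (ω*(T-t))).comp t (hasDerivAt_inner ω T t)
    have hN := hsin.const_mul ζ
    have hD := (hcos.const_mul ω).add (hsin.const_mul κ)
    have hdiv := hN.div hD hd.ne'
    refine hdiv.congr_deriv (Eq.symm ?_)
    simp only [Function.comp, Pi.add_apply]
    have key : ζ * (Real.cos (ω*(T-t)) * (-ω)) *
          (ω * Real.cos (ω*(T-t)) + κ * Real.sin (ω*(T-t)))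
        - ζ * Real.sin (ω*(T-t)) *
          (ω * (-Real.sin (ω*(T-t)) * (-ω)) + κ * (Real.cos (ω*(T-t)) * (-ω)))
        = -2*b^2*(ζ * Real.sin (ω*(T-t)))^2
          + 2*κ*(ζ * Real.sin (ω*(T-t)))*(ω * Real.cos (ω*(T-t)) + κ * Real.sin (ω*(T-t)))
          - ζ*(ω * Real.cos (ω*(T-t)) + κ * Real.sin (ω*(T-t)))^2 := by
      linear_combination (-(ζ * Real.sin (ω*(T-t))^2)) * hω2
    rw [key, eq_div_iff (pow_ne_zero 2 hd.ne')]
    have e : (ζ * Real.sin (ω*(T-t))) / (ω * Real.cos (ω*(T-t)) + κ * Real.sin (ω*(T-t))) * (ω * Real.cos (ω*(T-t)) + κ * Real.sin (ω*(T-t))) = ζ * Real.sin (ω*(T-t)) := div_mul_cancel₀ _ hd.ne'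
    linear_combination (-2*b^2*((ζ * Real.sin (ω*(T-t))) / (ω * Real.cos (ω*(T-t)) + κ * Real.sin (ω*(T-t))) * (ω * Real.cos (ω*(T-t)) + κ * Real.sin (ω*(T-t))) + ζ * Real.sin (ω*(T-t))) + 2*κ*(ω * Real.cos (ω*(T-t)) + κ * Real.sin (ω*(T-t)))) * e

/-- Lemma B.3 / Proposition 4.1 parameter conditions: under `Δ ≤ 0`, or
`Δ > 0` and `T < (π - arctan(√Δ/κ))/√Δ`, the terminal value Riccati problem
`g' = -2 b² g² + 2κ g - ζ`, `g T = 0` has a (unique) nonnegative solution on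
`[0, T]`. -/
theorem stmt11 (κ b ζ T : ℝ) (hκ : 0 < κ) (hb : b ≠ 0) (hζ : 0 < ζ) (hT : 0 < T)
    (hcond : 2 * b ^ 2 * ζ - κ ^ 2 ≤ 0 ∨
      (0 < 2 * b ^ 2 * ζ - κ ^ 2 ∧
        T < (Real.pi - Real.arctan (Real.sqrt (2 * b ^ 2 * ζ - κ ^ 2) / κ)) /
          Real.sqrt (2 * b ^ 2 * ζ - κ ^ 2))) :
    ∃ g : ℝ → ℝ, g T = 0 ∧ (∀ t ∈ Icc (0 : ℝ) T, 0 ≤ g t) ∧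
      (∀ t ∈ Icc (0 : ℝ) T,
        HasDerivAt g (-2 * b ^ 2 * g t ^ 2 + 2 * κ * g t - ζ) t) ∧
      (∀ w : ℝ → ℝ, w T = 0 →
        (∀ t ∈ Icc (0 : ℝ) T,
          HasDerivAt w (-2 * b ^ 2 * w t ^ 2 + 2 * κ * w t - ζ) t) →
        ∀ t ∈ Icc (0 : ℝ) T, w t = g t) := by
  have key : ∃ g : ℝ → ℝ, g T = 0 ∧ (∀ t ∈ Icc (0:ℝ) T, 0 ≤ g t) ∧
      (∀ t ∈ Icc (0:ℝ) T, HasDerivAt g (-2 * b ^ 2 * g t ^ 2 + 2 * κ * g t - ζ) t) := by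
    rcases hcond with h | ⟨h1, h2⟩
    · rcases eq_or_lt_of_le h with h | h
      · exact exists_zero κ b ζ T hκ hζ (by linarith)
      · exact exists_neg κ b ζ T hκ hζ (by linarith)
    · exact exists_pos κ b ζ T hκ hζ hT h1 h2
  obtain ⟨g, h1, h2, h3⟩ := key
  refine ⟨g, h1, h2, h3, fun w hwT hw' => ?_⟩
  exact riccati_uniq κ b ζ T h3 hw' (by rw [hwT, h1])
end
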